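/- Let H be a graph on m vertices and let G be a triangle-free graph on n vertices maximizing the number of injective embeddings of H among all triangle-free n-vertex graphs. Then for any two vertices u, v of G, h(v) ≤ h(u) + h(u, v), where h(u, v) denotes the number of injective embeddings whose image contains both u and v. -/

import Mathlib

/-- The number of injective adjacency-preserving maps from `H` to `G`. -/
noncomputable def injEmbCount {α β : Type*} [Fintype α] [Fintype β]
    (H : SimpleGraph α) (G : SimpleGraph β) : ℕ :=
  Nat.card {f : α → β // Function.Injective f ∧ ∀ a b, H.Adj a b → G.Adj (f a) (f b)}

/-- The `H`-degree of a vertex `v` of `G`. -/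
noncomputable def hDeg {α β : Type*} [Fintype α] [Fintype β]
    (H : SimpleGraph α) (G : SimpleGraph β) (v : β) : ℕ :=
  Nat.card {f : α → β // Function.Injective f ∧ (∀ a b, H.Adj a b → G.Adj (f a) (f b)) ∧
    v ∈ Set.range f}

/-- The number of injective embeddings of `H` in `G` whose image contains both `u` and `v`. -/
noncomputable def hDeg2 {α β : Type*} [Fintype α] [Fintype β]
    (H : SimpleGraph α) (G : SimpleGraph β) (u v : β) : ℕ :=
  Nat.card {f : α → β // Function.Injective f ∧ (∀ a b, H.Adj a b → G.Adj (f a) (f b)) ∧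
    u ∈ Set.range f ∧ v ∈ Set.range f}

private lemma card_congr_iff {γ : Type*} {p q : γ → Prop} (h : ∀ x, p x ↔ q x) :
    Nat.card {x // p x} = Nat.card {x // q x} :=
  Nat.card_congr (Equiv.subtypeEquivRight h)

/-- If `G` is a triangle-free graph on `n` vertices maximizing the number of injective
embeddings of `H` among triangle-free graphs on `n` vertices, then for any vertices
`u, v` we have `h(v) ≤ h(u) + h(u,v)`. -/
theorem hDeg_almost_equal {α : Type*} [Fintype α] (H : SimpleGraph α) (n : ℕ)
    (G : SimpleGraph (Fin n)) (hG : G.CliqueFree 3)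
    (hmax : ∀ G' : SimpleGraph (Fin n), G'.CliqueFree 3 →
      injEmbCount H G' ≤ injEmbCount H G)
    (u v : Fin n) :
    hDeg H G v ≤ hDeg H G u + hDeg2 H G u v := by
  classical
  by_cases huv : u = v
  · subst huv
    have : hDeg H G u ≤ hDeg2 H G u u := by
      apply le_of_eq
      exact card_congr_iff (fun f => by tauto)
    omega
  -- the "twin" replacement map
  set r : Fin n → Fin n := fun x => if x = u then v else x with hr
  have hru : r u = v := by simp [hr]
  have hrne : ∀ x, x ≠ u → r x = x := fun x hx => by simp [hr, hx]
  -- the modified graph G' where u is a non-adjacent twin of v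
  set G' : SimpleGraph (Fin n) :=
    { Adj := fun x y => x ≠ y ∧ G.Adj (r x) (r y)
      symm := ⟨fun x y h => ⟨h.1.symm, h.2.symm⟩⟩
      loopless := ⟨fun x h => h.1 rfl⟩ } with hG'
  have hG'adj : ∀ x y, G'.Adj x y ↔ x ≠ y ∧ G.Adj (r x) (r y) := fun x y => Iff.rfl
  -- G' is triangle-free
  have hG'free : G'.CliqueFree 3 := by
    intro t ht
    rw [SimpleGraph.is3Clique_iff] at ht
    obtain ⟨a, b, c, hab, hac, hbc, -⟩ := ht
    exact hG {r a, r b, r c}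
      (SimpleGraph.is3Clique_iff.mpr ⟨r a, r b, r c, hab.2, hac.2, hbc.2, rfl⟩)
  -- sets of embeddings
  set S : Set (α → Fin n) :=
    {f | Function.Injective f ∧ ∀ a b, H.Adj a b → G.Adj (f a) (f b)} with hS
  set S' : Set (α → Fin n) :=
    {f | Function.Injective f ∧ ∀ a b, H.Adj a b → G'.Adj (f a) (f b)} with hS'
  set A : Set (α → Fin n) := {f ∈ S | u ∉ Set.range f} with hA
  set Au : Set (α → Fin n) := {f ∈ S | u ∈ Set.range f} with hAu
  set B : Set (α → Fin n) := {f ∈ S | v ∈ Set.range f ∧ u ∉ Set.range f} with hB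
  have finS' : S'.Finite := Set.toFinite _
  have finA : A.Finite := Set.toFinite _
  have finAu : Au.Finite := Set.toFinite _
  have finB : B.Finite := Set.toFinite _
  -- A ⊆ S'
  have hAS' : A ⊆ S' := by
    rintro f ⟨⟨hinj, hpres⟩, hu⟩
    refine ⟨hinj, fun a b hab => ?_⟩
    have ha : f a ≠ u := fun h => hu ⟨a, h⟩
    have hb : f b ≠ u := fun h => hu ⟨b, h⟩
    exact ⟨fun h => (H.ne_of_adj hab) (hinj h),
      by rw [hrne _ ha, hrne _ hb]; exact hpres a b hab⟩
  -- the swap map sends B into S'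
  have hswapkey : ∀ x, x ≠ u → r (Equiv.swap u v x) = x := by
    intro x hx
    by_cases hxv : x = v
    · subst hxv; rw [Equiv.swap_apply_right, hru]
    · rw [Equiv.swap_apply_of_ne_of_ne hx hxv, hrne _ hx]
  have hBS' : ∀ f ∈ B, (Equiv.swap u v ∘ f) ∈ S' := by
    rintro f ⟨⟨hinj, hpres⟩, -, hu⟩
    refine ⟨(Equiv.swap u v).injective.comp hinj, fun a b hab => ?_⟩
    have ha : f a ≠ u := fun h => hu ⟨a, h⟩
    have hb : f b ≠ u := fun h => hu ⟨b, h⟩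
    refine ⟨fun h => (H.ne_of_adj hab) (hinj ((Equiv.swap u v).injective h)), ?_⟩
    simp only [Function.comp_apply]
    rw [hswapkey _ ha, hswapkey _ hb]
    exact hpres a b hab
  -- the image of B under the swap is disjoint from A
  have hdisj : Disjoint A ((Equiv.swap u v ∘ ·) '' B) := by
    rw [Set.disjoint_left]
    rintro g ⟨-, hgu⟩ ⟨f, ⟨-, ⟨a, hfa⟩, -⟩, hg⟩
    exact hgu ⟨a, by rw [← hg]; simp [Function.comp_apply, hfa]⟩
  have hunionsub : A ∪ ((Equiv.swap u v ∘ ·) '' B) ⊆ S' := by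
    rintro g (hg | ⟨f, hf, rfl⟩)
    · exact hAS' hg
    · exact hBS' f hf
  have hswapinj : Function.Injective (fun f : α → Fin n => Equiv.swap u v ∘ f) := by
    intro f g h
    funext a
    have := congrFun h a
    exact (Equiv.swap u v).injective this
  -- main counting inequality
  have hcount : A.ncard + B.ncard ≤ S'.ncard := by
    calc A.ncard + B.ncard
        = A.ncard + ((Equiv.swap u v ∘ ·) '' B).ncard := by
          rw [Set.ncard_image_of_injective _ hswapinj]
      _ = (A ∪ ((Equiv.swap u v ∘ ·) '' B)).ncard := by
          rw [Set.ncard_union_eq hdisj finA (finB.image _)]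
      _ ≤ S'.ncard := Set.ncard_le_ncard hunionsub finS'
  -- identify counts
  have hS'count : S'.ncard = injEmbCount H G' := rfl
  have hScount : injEmbCount H G = A.ncard + Au.ncard := by
    have hpart : S = A ∪ Au := by
      ext f; constructor
      · intro hf; by_cases h : u ∈ Set.range f
        · exact Or.inr ⟨hf, h⟩
        · exact Or.inl ⟨hf, h⟩
      · rintro (⟨hf, -⟩ | ⟨hf, -⟩) <;> exact hf
    have hd : Disjoint A Au := by
      rw [Set.disjoint_left]; rintro f ⟨-, h1⟩ ⟨-, h2⟩; exact h1 h2
    have : injEmbCount H G = S.ncard := rfl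
    rw [this, hpart, Set.ncard_union_eq hd finA finAu]
  have hAucount : Au.ncard = hDeg H G u := by
    apply card_congr_iff
    intro f
    simp only [hAu, hS, Set.mem_setOf_eq]
    tauto
  set Buv : Set (α → Fin n) := {f ∈ S | u ∈ Set.range f ∧ v ∈ Set.range f} with hBuv
  have finBuv : Buv.Finite := Set.toFinite _
  have hBuvcount : Buv.ncard = hDeg2 H G u v := by
    apply card_congr_iff
    intro f
    simp only [hBuv, hS, Set.mem_setOf_eq]
    tauto
  have hdegv : hDeg H G v = B.ncard + hDeg2 H G u v := by
    have h1 : hDeg H G v = ({f ∈ S | v ∈ Set.range f} : Set (α → Fin n)).ncard := by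
      apply card_congr_iff
      intro f
      simp only [hS, Set.mem_setOf_eq]
      tauto
    have hpart : ({f ∈ S | v ∈ Set.range f} : Set (α → Fin n)) = B ∪ Buv := by
      ext f
      simp only [hB, hBuv, hS, Set.mem_setOf_eq, Set.mem_union]
      tauto
    have hd : Disjoint B Buv := by
      rw [Set.disjoint_left]
      rintro f ⟨-, -, h1⟩ ⟨-, h2, -⟩
      exact h1 h2
    rw [h1, hpart, Set.ncard_union_eq hd finB finBuv, hBuvcount]
  -- put things together
  have hmaxG' := hmax G' hG'free
  rw [← hS'count] at hmaxG'
  rw [hScount] at hmaxG'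
  have hBle : B.ncard ≤ Au.ncard := by omega
  rw [hdegv, ← hAucount]
  omega
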